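/- Let σ ≥ 1 and 0 ≤ σ₁ < σ/2 < σ₂ ≤ σ be real numbers. Then there exist ε* ∈ (0,1) and constants c, C > 0 such that for all r ∈ (0, ε*) and all t ≥ 0: 0 ≤ K̂₁(t,r) ≤ C·r^{−2σ₁}·e^{−c·r^{2(σ−σ₁)}·t}. -/
import Mathlib
set_option maxHeartbeats 2000000


/-- The discriminant `D(r) = (r^{2σ₁} + r^{2σ₂})² − 4 r^{2σ}`. -/
noncomputable def Dfun (σ σ₁ σ₂ r : ℝ) : ℝ :=
  (r ^ (2 * σ₁) + r ^ (2 * σ₂)) ^ 2 - 4 * r ^ (2 * σ)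

/-- The characteristic root `λ₁(r) = (−(r^{2σ₁}+r^{2σ₂}) + √D(r))/2`. -/
noncomputable def lam1 (σ σ₁ σ₂ r : ℝ) : ℝ :=
  (-(r ^ (2 * σ₁) + r ^ (2 * σ₂)) + Real.sqrt (Dfun σ σ₁ σ₂ r)) / 2

/-- The characteristic root `λ₂(r) = (−(r^{2σ₁}+r^{2σ₂}) − √D(r))/2`. -/
noncomputable def lam2 (σ σ₁ σ₂ r : ℝ) : ℝ :=
  (-(r ^ (2 * σ₁) + r ^ (2 * σ₂)) - Real.sqrt (Dfun σ σ₁ σ₂ r)) / 2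

/-- The kernel symbol `K̂₁(t,r) = (e^{λ₁(r)t} − e^{λ₂(r)t})/(λ₁(r) − λ₂(r))`. -/
noncomputable def K1hat (σ σ₁ σ₂ r t : ℝ) : ℝ :=
  (Real.exp (lam1 σ σ₁ σ₂ r * t) - Real.exp (lam2 σ σ₁ σ₂ r * t)) /
    (lam1 σ σ₁ σ₂ r - lam2 σ σ₁ σ₂ r)

/-- small-frequency kernel bound
`0 ≤ K̂₁(t,r) ≤ C r^{−2σ₁} e^{−c r^{2(σ−σ₁)} t}` for `r ∈ (0, ε*)`, `t ≥ 0`. -/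
theorem stmt5 (σ σ₁ σ₂ : ℝ) (hσ : 1 ≤ σ) (h1 : 0 ≤ σ₁) (h2 : σ₁ < σ / 2)
    (h3 : σ / 2 < σ₂) (h4 : σ₂ ≤ σ) :
    ∃ ε ∈ Set.Ioo (0 : ℝ) 1, ∃ c C : ℝ, 0 < c ∧ 0 < C ∧
      ∀ r ∈ Set.Ioo (0 : ℝ) ε, ∀ t : ℝ, 0 ≤ t →
        0 ≤ K1hat σ σ₁ σ₂ r t ∧
        K1hat σ σ₁ σ₂ r t ≤
          C * r ^ (-(2 * σ₁)) * Real.exp (-c * r ^ (2 * (σ - σ₁)) * t) := by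
  have heo : (0:ℝ) < 2 * (σ - 2 * σ₁) := by linarith
  set e : ℝ := 2 * (σ - 2 * σ₁) with he_def
  have hε8 : (0:ℝ) < (1/8 : ℝ) ^ e⁻¹ := Real.rpow_pos_of_pos (by norm_num) _
  refine ⟨min (1/2) ((1/8 : ℝ) ^ e⁻¹), ⟨by positivity,
    lt_of_le_of_lt (min_le_left _ _) (by norm_num)⟩, 1/2, 2, by norm_num, by norm_num, ?_⟩
  rintro r ⟨hr0, hrε⟩ t ht
  have hr1 : r ≤ 1 := le_trans hrε.le (le_trans (min_le_left _ _) (by norm_num))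
  have ha : 0 < r ^ (2*σ₁) := Real.rpow_pos_of_pos hr0 _
  have hb : 0 < r ^ (2*σ₂) := Real.rpow_pos_of_pos hr0 _
  have hp : 0 < r ^ (2*σ) := Real.rpow_pos_of_pos hr0 _
  have hba : r ^ (2*σ₂) ≤ r ^ (2*σ₁) :=
    Real.rpow_le_rpow_of_exponent_ge hr0 hr1 (by linarith)
  have hre : r ^ e ≤ 1/8 := by
    have h1' : r ^ e ≤ ((1/8:ℝ) ^ e⁻¹) ^ e :=
      Real.rpow_le_rpow hr0.le (le_trans hrε.le (min_le_right _ _)) heo.le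
    rwa [Real.rpow_inv_rpow (by norm_num) (ne_of_gt heo)] at h1'
  have hq4 : 0 < r ^ (4*σ₁) := Real.rpow_pos_of_pos hr0 _
  have hasq : (r^(2*σ₁))^2 = r^(4*σ₁) := by
    rw [sq, ← Real.rpow_add hr0]; ring_nf
  have hpeq : r^(2*σ) = r^e * r^(4*σ₁) := by
    rw [← Real.rpow_add hr0]; congr 1; ring
  have h4p : 4 * r^(2*σ) ≤ (r^(2*σ₁))^2 / 2 := by
    rw [hpeq, hasq]
    nlinarith [mul_le_mul_of_nonneg_right hre hq4.le]
  have hD : (r^(2*σ₁)/2)^2 ≤ Dfun σ σ₁ σ₂ r := by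
    unfold Dfun
    nlinarith [mul_pos ha hb, sq_nonneg (r^(2*σ₂))]
  have hDpos : 0 < Dfun σ σ₁ σ₂ r :=
    lt_of_lt_of_le (by positivity) hD
  have hsqrtD : r^(2*σ₁)/2 ≤ Real.sqrt (Dfun σ σ₁ σ₂ r) := by
    calc r^(2*σ₁)/2 = Real.sqrt ((r^(2*σ₁)/2)^2) := (Real.sqrt_sq (by positivity)).symm
    _ ≤ _ := Real.sqrt_le_sqrt hD
  have hsD : 0 < Real.sqrt (Dfun σ σ₁ σ₂ r) := lt_of_lt_of_le (by positivity) hsqrtD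
  have hdiff : lam1 σ σ₁ σ₂ r - lam2 σ σ₁ σ₂ r = Real.sqrt (Dfun σ σ₁ σ₂ r) := by
    unfold lam1 lam2; ring
  have hsqD : Real.sqrt (Dfun σ σ₁ σ₂ r) ^ 2 = Dfun σ σ₁ σ₂ r := Real.sq_sqrt hDpos.le
  have hprod : lam1 σ σ₁ σ₂ r * lam2 σ σ₁ σ₂ r = r ^ (2*σ) := by
    have h : lam1 σ σ₁ σ₂ r * lam2 σ σ₁ σ₂ r =
        ((r ^ (2*σ₁) + r ^ (2*σ₂))^2 - Real.sqrt (Dfun σ σ₁ σ₂ r) ^ 2) / 4 := by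
      unfold lam1 lam2; ring
    rw [h, hsqD]; unfold Dfun; ring
  have hsle : Real.sqrt (Dfun σ σ₁ σ₂ r) ≤ r ^ (2*σ₁) + r ^ (2*σ₂) := by
    calc Real.sqrt (Dfun σ σ₁ σ₂ r) ≤ Real.sqrt ((r ^ (2*σ₁) + r ^ (2*σ₂))^2) := by
          apply Real.sqrt_le_sqrt; unfold Dfun; nlinarith
    _ = r ^ (2*σ₁) + r ^ (2*σ₂) := Real.sqrt_sq (by positivity)
  have hl2lb : -(2 * r ^ (2*σ₁)) ≤ lam2 σ σ₁ σ₂ r := by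
    have hdef : lam2 σ σ₁ σ₂ r =
        (-(r ^ (2*σ₁) + r ^ (2*σ₂)) - Real.sqrt (Dfun σ σ₁ σ₂ r)) / 2 := rfl
    rw [hdef]; linarith
  have hl2neg : lam2 σ σ₁ σ₂ r < 0 := by
    have hdef : lam2 σ σ₁ σ₂ r =
        (-(r ^ (2*σ₁) + r ^ (2*σ₂)) - Real.sqrt (Dfun σ σ₁ σ₂ r)) / 2 := rfl
    rw [hdef]; linarith
  have hl1neg : lam1 σ σ₁ σ₂ r < 0 := by nlinarith
  have hqa : r ^ (2*(σ - σ₁)) * r ^ (2*σ₁) = r ^ (2*σ) := by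
    rw [← Real.rpow_add hr0]; congr 1; ring
  have hqpos : 0 < r ^ (2*(σ - σ₁)) := Real.rpow_pos_of_pos hr0 _
  have hl1 : lam1 σ σ₁ σ₂ r ≤ -(1/2) * r ^ (2*(σ - σ₁)) := by
    have k1 : (-lam1 σ σ₁ σ₂ r) * (-(2 * r ^ (2*σ₁))) ≤
        (-lam1 σ σ₁ σ₂ r) * lam2 σ σ₁ σ₂ r :=
      mul_le_mul_of_nonneg_left hl2lb (by linarith)
    have k2 : 2 * r^(2*σ₁) * lam1 σ σ₁ σ₂ r ≤ -(r^(2*σ)) := by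
      nlinarith [k1, hprod]
    have k3 : r^(2*σ₁) * (lam1 σ σ₁ σ₂ r + (1/2) * r ^ (2*(σ - σ₁))) ≤ 0 := by
      nlinarith [k2, hqa]
    have k4 : lam1 σ σ₁ σ₂ r + (1/2) * r ^ (2*(σ - σ₁)) ≤ 0 := by
      by_contra h
      push_neg at h
      exact absurd k3 (not_le.mpr (mul_pos ha h))
    linarith
  have hE2 : (0:ℝ) < Real.exp (lam2 σ σ₁ σ₂ r * t) := Real.exp_pos _
  have hE12 : Real.exp (lam2 σ σ₁ σ₂ r * t) ≤ Real.exp (lam1 σ σ₁ σ₂ r * t) := by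
    apply Real.exp_le_exp.mpr
    apply mul_le_mul_of_nonneg_right _ ht
    nlinarith
  constructor
  · unfold K1hat
    rw [hdiff]
    exact div_nonneg (by linarith) hsD.le
  · have ha2 : (0:ℝ) < r^(2*σ₁)/2 := by linarith
    calc K1hat σ σ₁ σ₂ r t
        ≤ Real.exp (lam1 σ σ₁ σ₂ r * t) / Real.sqrt (Dfun σ σ₁ σ₂ r) := by
          unfold K1hat
          rw [hdiff]
          exact (div_le_div_iff_of_pos_right hsD).mpr (by linarith)
    _ ≤ Real.exp (lam1 σ σ₁ σ₂ r * t) / (r^(2*σ₁)/2) :=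
          div_le_div_of_nonneg_left (Real.exp_pos _).le ha2 hsqrtD
    _ = 2 * (r^(2*σ₁))⁻¹ * Real.exp (lam1 σ σ₁ σ₂ r * t) := by
          rw [div_div_eq_mul_div, div_eq_mul_inv]
          ring
    _ ≤ 2 * (r^(2*σ₁))⁻¹ * Real.exp (-(1/2) * r ^ (2*(σ - σ₁)) * t) := by
          have hinv : (0:ℝ) ≤ 2 * (r^(2*σ₁))⁻¹ := by positivity
          exact mul_le_mul_of_nonneg_left
            (Real.exp_le_exp.mpr (mul_le_mul_of_nonneg_right hl1 ht)) hinv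
    _ = 2 * r ^ (-(2*σ₁)) * Real.exp (-(1/2) * r ^ (2*(σ - σ₁)) * t) := by
          rw [Real.rpow_neg hr0.le]
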